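/- arXiv:1810.02654 — 3 statements merged into one kernel-verified Lean document; each statement's English description precedes it below -/
import Mathlib

section
/- Let X be a finitely generated virtually abelian group, let Y be an arbitrary group, and let ρ_Y : X × Y → Y denote the natural projection. If H is a subgroup of X × Y such that ρ_Y(H) is a virtual retract of Y, then H is a virtual retract of X × Y. -/
/-- `H` is a virtual retract of `G`: there are a finite-index subgroup `K` of `G` containing `H`
and a homomorphism `ρ : K → G` with image inside `H` restricting to the identity on `H`. -/
def IsVirtualRetract {G : Type*} [Group G] (H : Subgroup G) : Prop :=
  ∃ (K : Subgroup G) (hHK : H ≤ K), K.FiniteIndex ∧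
    ∃ ρ : ↥K →* G, (∀ k : ↥K, ρ k ∈ H) ∧ ∀ (h : G) (hh : h ∈ H), ρ ⟨h, hHK hh⟩ = h

/-- A group is virtually abelian if it has an abelian subgroup of finite index. -/
def VirtuallyAbelian (G : Type*) [Group G] : Prop :=
  ∃ B : Subgroup G, B.FiniteIndex ∧ ∀ x y : ↥B, x * y = y * x

/-- If `B` normalizes `A`, every element of `A ⊔ B` is a product `a * b`. -/
theorem sup_decomp {G : Type*} [Group G] (A B : Subgroup G)
    (hB : ∀ b ∈ B, ∀ a ∈ A, b * a * b⁻¹ ∈ A) :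
    ∀ z ∈ A ⊔ B, ∃ a ∈ A, ∃ b ∈ B, z = a * b := by
  intro z hz
  rw [Subgroup.sup_eq_closure] at hz
  induction hz using Subgroup.closure_induction with
  | mem x hx =>
    rcases hx with hx | hx
    · exact ⟨x, hx, 1, one_mem _, (mul_one x).symm⟩
    · exact ⟨1, one_mem _, x, hx, (one_mul x).symm⟩
  | one => exact ⟨1, one_mem _, 1, one_mem _, (one_mul 1).symm⟩
  | mul x y _ _ hx hy =>
    obtain ⟨a, ha, b, hb, rfl⟩ := hx
    obtain ⟨a', ha', b', hb', rfl⟩ := hy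
    exact ⟨a * (b * a' * b⁻¹), mul_mem ha (hB b hb a' ha'), b * b', mul_mem hb hb', by group⟩
  | inv x _ hx =>
    obtain ⟨a, ha, b, hb, rfl⟩ := hx
    exact ⟨b⁻¹ * a⁻¹ * b⁻¹⁻¹, hB b⁻¹ (inv_mem hb) a⁻¹ (inv_mem ha), b⁻¹, inv_mem hb, by group⟩

/-- If `H` normalizes `C` and `C ∩ H = 1`, then `C ⊔ H` retracts onto `H`. -/
theorem retract_of_complement {G : Type*} [Group G] (C H : Subgroup G)
    (hnorm : ∀ h ∈ H, ∀ c ∈ C, h * c * h⁻¹ ∈ C) (hint : C ⊓ H = ⊥) :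
    ∃ ρ : ↥(C ⊔ H) →* G, (∀ k, ρ k ∈ H) ∧ ∀ h (hh : h ∈ H),
      ρ ⟨h, Subgroup.mem_sup_right hh⟩ = h := by
  set K := C ⊔ H with hK
  have hdec : ∀ z ∈ K, ∃ a ∈ C, ∃ b ∈ H, z = a * b := sup_decomp C H hnorm
  have hCnormal : (C.subgroupOf K).Normal := by
    constructor
    intro n hn g
    obtain ⟨a, ha, b, hb, hab⟩ := hdec g g.2
    have : (g : G) * n * (g : G)⁻¹ ∈ C := by
      rw [hab, mul_inv_rev]
      have h1 : b * (n : G) * b⁻¹ ∈ C := hnorm b hb _ hn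
      have := mul_mem (mul_mem ha h1) (inv_mem ha)
      convert this using 1
      group
    simpa [Subgroup.mem_subgroupOf] using this
  let φ : ↥H →* ↥K ⧸ C.subgroupOf K :=
    (QuotientGroup.mk' (C.subgroupOf K)).comp (Subgroup.inclusion le_sup_right)
  have hinj : Function.Injective φ := by
    intro x y hxy
    have h1 : ((Subgroup.inclusion (le_sup_right : H ≤ K) x)⁻¹ *
        Subgroup.inclusion le_sup_right y : ↥K) ∈ C.subgroupOf K := by
      exact QuotientGroup.eq.mp hxy
    have h2 : ((x : G)⁻¹ * y) ∈ C := by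
      simpa [Subgroup.mem_subgroupOf] using h1
    have h3 : ((x : G)⁻¹ * y) ∈ H := mul_mem (inv_mem x.2) y.2
    have h4 : ((x : G)⁻¹ * y) = 1 := by
      have := hint ▸ Subgroup.mem_inf.mpr ⟨h2, h3⟩
      simpa using this
    ext
    exact (inv_mul_eq_one.mp h4)
  have hsurj : Function.Surjective φ := by
    intro q
    obtain ⟨k, rfl⟩ := QuotientGroup.mk'_surjective _ q
    obtain ⟨a, ha, b, hb, hab⟩ := hdec k k.2
    refine ⟨⟨b, hb⟩, ?_⟩
    show QuotientGroup.mk' _ _ = QuotientGroup.mk' _ k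
    refine (QuotientGroup.eq).mpr ?_
    have hmem : ((Subgroup.inclusion (le_sup_right : H ≤ K) ⟨b, hb⟩ : ↥K) : G)⁻¹ * k ∈ C := by
      show (b : G)⁻¹ * (k : G) ∈ C
      rw [hab]
      have : b⁻¹ * a * b⁻¹⁻¹ ∈ C := hnorm b⁻¹ (inv_mem hb) a ha
      convert this using 1
      group
    simpa [Subgroup.mem_subgroupOf] using hmem
  let e : ↥H ≃* ↥K ⧸ C.subgroupOf K := MulEquiv.ofBijective φ ⟨hinj, hsurj⟩
  refine ⟨H.subtype.comp (e.symm.toMonoidHom.comp (QuotientGroup.mk' (C.subgroupOf K))), ?_, ?_⟩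
  · intro k
    exact (e.symm (QuotientGroup.mk' (C.subgroupOf K) k)).2
  · intro h hh
    have h1 : (QuotientGroup.mk' (C.subgroupOf K)) ⟨h, Subgroup.mem_sup_right hh⟩ = e ⟨h, hh⟩ := rfl
    show (H.subtype) (e.symm ((QuotientGroup.mk' (C.subgroupOf K)) ⟨h, Subgroup.mem_sup_right hh⟩)) = h
    rw [h1, MulEquiv.symm_apply_apply]
    rfl


/-- Invariant almost-complement for a finite group of automorphisms of a f.g. free ℤ-module. -/
theorem module_complement {V : Type*} [AddCommGroup V] [Module.Finite ℤ V]
    [NoZeroSMulDivisors ℤ V] (G : Subgroup (V ≃ₗ[ℤ] V)) (hGfin : Finite ↥G)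
    (N : Submodule ℤ V) (hN : ∀ g ∈ G, ∀ v ∈ N, g v ∈ N) :
    ∃ C : Submodule ℤ V, (∀ g ∈ G, ∀ v ∈ C, g v ∈ C) ∧ C ⊓ N = ⊥ ∧
      Finite (V ⧸ (C ⊔ N)) := by
  classical
  -- the saturation of N
  let S : Submodule ℤ V :=
    { carrier := {v | ∃ k : ℤ, k ≠ 0 ∧ k • v ∈ N}
      add_mem' := by
        rintro a b ⟨k, hk, hka⟩ ⟨l, hl, hlb⟩
        refine ⟨k * l, mul_ne_zero hk hl, ?_⟩
        have heq : (k * l) • (a + b) = l • (k • a) + k • (l • b) := by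
          rw [smul_add]
          congr 1
          · rw [mul_comm, mul_smul]
          · rw [mul_smul]
        rw [heq]
        exact add_mem (N.smul_mem l hka) (N.smul_mem k hlb)
      zero_mem' := ⟨1, one_ne_zero, by simp⟩
      smul_mem' := by
        rintro c a ⟨k, hk, hka⟩
        exact ⟨k, hk, by rw [smul_comm]; exact N.smul_mem c hka⟩ }
  have hNS : N ≤ S := fun v hv => ⟨1, one_ne_zero, by simpa using hv⟩
  have hSinv : ∀ g ∈ G, ∀ v ∈ S, g v ∈ S := by
    rintro g hg v ⟨k, hk, hkv⟩
    refine ⟨k, hk, ?_⟩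
    have := hN g hg _ hkv
    rwa [g.map_smul] at this
  -- the quotient V ⧸ S is torsion-free, hence free, hence projective
  haveI : NoZeroSMulDivisors ℤ (V ⧸ S) := by
    constructor
    intro c x h
    rcases eq_or_ne c 0 with rfl | hc
    · exact Or.inl rfl
    · right
      obtain ⟨v, rfl⟩ := S.mkQ_surjective x
      have hcv : c • v ∈ S := by
        have h2 : S.mkQ (c • v) = 0 := by rw [map_smul, h]
        rwa [Submodule.mkQ_apply, Submodule.Quotient.mk_eq_zero] at h2
      obtain ⟨j, hj, hjcv⟩ := hcv
      have hvS : v ∈ S := ⟨j * c, mul_ne_zero hj hc, by rwa [mul_smul]⟩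
      show S.mkQ v = 0
      rwa [Submodule.mkQ_apply, Submodule.Quotient.mk_eq_zero]
  haveI : Module.Free ℤ (V ⧸ S) := Module.free_of_finite_type_torsion_free'
  obtain ⟨σ, hσ⟩ := Module.projective_lifting_property S.mkQ LinearMap.id S.mkQ_surjective
  set π₀ : V →ₗ[ℤ] V := LinearMap.id - σ ∘ₗ S.mkQ with hπ₀
  have hπ₀S : ∀ v, π₀ v ∈ S := by
    intro v
    have h0 : S.mkQ (π₀ v) = 0 := by
      simp only [hπ₀, LinearMap.sub_apply, LinearMap.id_apply, LinearMap.comp_apply, map_sub]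
      have := congrArg (fun f : V ⧸ S →ₗ[ℤ] V ⧸ S => f (S.mkQ v)) hσ
      simp only [LinearMap.comp_apply, LinearMap.id_apply] at this
      rw [this]
      exact sub_self _
    rwa [Submodule.mkQ_apply, Submodule.Quotient.mk_eq_zero] at h0
  have hπ₀id : ∀ v ∈ S, π₀ v = v := by
    intro v hv
    have h0 : S.mkQ v = 0 := by
      rw [Submodule.mkQ_apply, Submodule.Quotient.mk_eq_zero]; exact hv
    simp [hπ₀, h0]
  haveI : Fintype ↥G := Fintype.ofFinite _
  set n : ℤ := (Fintype.card ↥G : ℤ) with hn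
  have hn0 : n ≠ 0 := by
    simp [hn, Fintype.card_ne_zero]
  set π : V →ₗ[ℤ] V :=
    ∑ g : ↥G, (g : V ≃ₗ[ℤ] V).toLinearMap ∘ₗ π₀ ∘ₗ (((g : V ≃ₗ[ℤ] V))⁻¹).toLinearMap
    with hπdef
  have hπapply : ∀ v, π v = ∑ g : ↥G, (g : V ≃ₗ[ℤ] V) (π₀ ((g : V ≃ₗ[ℤ] V)⁻¹ v)) := by
    intro v; rw [hπdef]; rw [LinearMap.sum_apply]; rfl
  have hinv_mem : ∀ g : ↥G, ((g : V ≃ₗ[ℤ] V))⁻¹ ∈ G := by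
    intro g
    exact (g⁻¹ : ↥G).2
  have hπS : ∀ v, π v ∈ S := by
    intro v
    rw [hπapply]
    exact S.sum_mem fun g _ => hSinv _ g.2 _ (hπ₀S _)
  have hπid : ∀ v ∈ S, π v = n • v := by
    intro v hv
    rw [hπapply]
    have hterm : ∀ g : ↥G, (g : V ≃ₗ[ℤ] V) (π₀ ((g : V ≃ₗ[ℤ] V)⁻¹ v)) = v := by
      intro g
      rw [hπ₀id _ (hSinv _ (hinv_mem g) _ hv)]
      exact (g : V ≃ₗ[ℤ] V).apply_symm_apply v
    rw [Finset.sum_congr rfl fun g _ => hterm g, Finset.sum_const, Finset.card_univ]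
    simp [hn]
  have hπcomm : ∀ h ∈ G, ∀ v, π ((h : V ≃ₗ[ℤ] V) v) = h (π v) := by
    intro h hh v
    rw [hπapply, hπapply, map_sum]
    refine (Fintype.sum_bijective (fun g => (⟨h, hh⟩ : ↥G) * g)
      (Group.mulLeft_bijective _) _ _ ?_).symm
    intro g
    show h ((g : V ≃ₗ[ℤ] V) (π₀ ((g : V ≃ₗ[ℤ] V)⁻¹ v)))
      = (((⟨h, hh⟩ * g : ↥G) : V ≃ₗ[ℤ] V)) (π₀ ((((⟨h, hh⟩ * g : ↥G) : V ≃ₗ[ℤ] V))⁻¹ (h v)))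
    have e1 : (((⟨h, hh⟩ * g : ↥G) : V ≃ₗ[ℤ] V)) = h * (g : V ≃ₗ[ℤ] V) := rfl
    rw [e1, mul_inv_rev]
    have e2 : ((g : V ≃ₗ[ℤ] V)⁻¹ * h⁻¹) (h v) = (g : V ≃ₗ[ℤ] V)⁻¹ v := by
      show (g : V ≃ₗ[ℤ] V)⁻¹ ((h⁻¹ : V ≃ₗ[ℤ] V) (h v)) = _
      congr 1
      exact h.symm_apply_apply v
    rw [e2]
    rfl
  refine ⟨LinearMap.ker π, ?_, ?_, ?_⟩
  · intro g hg v hv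
    rw [LinearMap.mem_ker] at hv ⊢
    rw [hπcomm g hg v, hv, map_zero]
  · rw [eq_bot_iff]
    rintro v ⟨hvC, hvN⟩
    have h1 : π v = 0 := hvC
    have h2 : π v = n • v := hπid v (hNS hvN)
    have : n • v = 0 := by rw [← h2, h1]
    have hv0 : v = 0 := by
      rcases smul_eq_zero.mp this with h | h
      · exact absurd h hn0
      · exact h
    simp [hv0]
  · set W := LinearMap.ker π ⊔ N with hW
    haveI : Module.Finite ℤ (V ⧸ W) := Module.Finite.quotient ℤ _
    apply Module.finite_of_fg_torsion
    intro x
    obtain ⟨v, rfl⟩ := W.mkQ_surjective x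
    obtain ⟨j, hj, hjv⟩ := hπS v
    refine ⟨⟨j * n, mem_nonZeroDivisors_of_ne_zero (mul_ne_zero hj hn0)⟩, ?_⟩
    have hker : n • v - π v ∈ LinearMap.ker π := by
      rw [LinearMap.mem_ker, map_sub, LinearMap.map_smul]
      rw [hπid (π v) (hπS v)]
      exact sub_self _
    have hmem : (j * n) • v ∈ W := by
      have hsplit : (j * n) • v = j • (n • v - π v) + j • π v := by
        rw [← smul_add]
        rw [sub_add_cancel, mul_smul]
      rw [hsplit, hW]
      exact add_mem (Submodule.mem_sup_left (Submodule.smul_mem _ j hker))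
        (Submodule.mem_sup_right hjv)
    have hfin : (j * n : ℤ) • W.mkQ v = 0 := by
      rw [← map_smul, Submodule.mkQ_apply, Submodule.Quotient.mk_eq_zero]
      exact hmem
    simpa [Submonoid.smul_def] using hfin

/-- Conjugation by `x` as an automorphism of an invariant subgroup. -/
def conjMulEquiv {X : Type*} [Group X] (B : Subgroup X)
    (hB : ∀ (x : X), ∀ b ∈ B, x * b * x⁻¹ ∈ B) (x : X) : ↥B ≃* ↥B where
  toFun b := ⟨x * b * x⁻¹, hB x b b.2⟩
  invFun b := ⟨x⁻¹ * b * x, by simpa using hB x⁻¹ b b.2⟩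
  left_inv b := Subtype.ext (by simp; group)
  right_inv b := Subtype.ext (by simp; group)
  map_mul' a b := Subtype.ext (by show x * ((a : X) * b) * x⁻¹ = (x * a * x⁻¹) * (x * b * x⁻¹); group)

theorem key_complement {X : Type*} [Group X] (hfg : Group.FG X) (hva : VirtuallyAbelian X)
    (M N : Subgroup X) (hNM : N ≤ M) (hNnorm : ∀ m ∈ M, ∀ n ∈ N, m * n * m⁻¹ ∈ N) :
    ∃ C : Subgroup X, (∀ m ∈ M, ∀ c ∈ C, m * c * m⁻¹ ∈ C) ∧ C ⊓ N = ⊥ ∧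
      (C ⊔ N).FiniteIndex := by
  classical
  haveI := hfg
  obtain ⟨B₀, hB₀fi, hB₀comm⟩ := hva
  haveI := hB₀fi
  set B₁ := B₀.normalCore with hB₁def
  haveI : B₁.FiniteIndex := Subgroup.finiteIndex_normalCore B₀
  haveI : B₁.Normal := Subgroup.normalCore_normal B₀
  have hB₁le : B₁ ≤ B₀ := Subgroup.normalCore_le B₀
  have hB₁comm : ∀ a b : X, a ∈ B₁ → b ∈ B₁ → a * b = b * a := by
    intro a b ha hb
    have := hB₀comm ⟨a, hB₁le ha⟩ ⟨b, hB₁le hb⟩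
    exact congrArg Subtype.val this
  haveI : Group.FG ↥B₁ := Subgroup.fg_of_index_ne_zero B₁
  letI : CommGroup ↥B₁ :=
    { (inferInstance : Group ↥B₁) with
      mul_comm := fun a b => Subtype.ext (hB₁comm a b a.2 b.2) }
  haveI : Module.Finite ℤ (Additive ↥B₁) :=
    Module.Finite.iff_addGroup_fg.mpr (GroupFG.iff_add_fg.mp inferInstance)
  haveI : IsNoetherian ℤ (Additive ↥B₁) :=
    isNoetherian_of_isNoetherianRing_of_finite ℤ (Additive ↥B₁)
  set T := Submodule.torsion ℤ (Additive ↥B₁) with hTdef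
  haveI : Module.Finite ℤ ↥T := Module.Finite.iff_fg.mpr (IsNoetherian.noetherian T)
  haveI hTfin : Finite ↥T := Module.finite_of_fg_torsion ↥T (Submodule.torsion_isTorsion)
  haveI : Fintype ↥T := Fintype.ofFinite _
  set e : ℕ := Fintype.card ↥T with hedef
  have he : e ≠ 0 := Fintype.card_ne_zero
  have hTe : ∀ t : ↥T, e • t = 0 := fun t => card_nsmul_eq_zero
  -- the subgroup of e-th powers of B₁
  let ψ : ↥B₁ →* X :=
    { toFun := fun b => (b : X) ^ e
      map_one' := one_pow e
      map_mul' := by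
        intro a b
        have hc : Commute (a : X) (b : X) := hB₁comm a b a.2 b.2
        simpa using hc.mul_pow e }
  set B₂ := ψ.range with hB₂def
  have hB₂mem : ∀ x : X, x ∈ B₂ ↔ ∃ c : ↥B₁, (c : X) ^ e = x := fun x => Iff.rfl
  have hB₂B₁ : B₂ ≤ B₁ := by
    rintro x ⟨c, rfl⟩
    exact pow_mem c.2 e
  have hB₂norm : ∀ (x : X), ∀ b ∈ B₂, x * b * x⁻¹ ∈ B₂ := by
    rintro x b ⟨c, rfl⟩
    refine ⟨⟨x * (c : X) * x⁻¹, Subgroup.Normal.conj_mem ‹B₁.Normal› _ c.2 x⟩, ?_⟩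
    show (x * (c : X) * x⁻¹) ^ e = x * (c : X) ^ e * x⁻¹
    exact conj_pow
  have hB₂comm : ∀ a b : X, a ∈ B₂ → b ∈ B₂ → a * b = b * a := fun a b ha hb =>
    hB₁comm a b (hB₂B₁ ha) (hB₂B₁ hb)
  -- torsion-freeness of B₂
  have hTF : ∀ x ∈ B₂, ∀ k : ℤ, k ≠ 0 → x ^ k = 1 → x = 1 := by
    rintro x ⟨c, rfl⟩ k hk hxk
    show (c : X) ^ e = 1
    have h1 : ((c : X) ^ e) ^ k = 1 := hxk
    have h2 : (c : X) ^ ((e : ℤ) * k) = 1 := by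
      rw [zpow_mul, zpow_natCast]; exact h1
    have h3 : c ^ ((e : ℤ) * k) = 1 := by
      apply Subtype.ext
      simp only [SubgroupClass.coe_zpow, OneMemClass.coe_one]
      exact h2
    have h4 : Additive.ofMul c ∈ T := by
      refine ⟨⟨(e : ℤ) * k, mem_nonZeroDivisors_of_ne_zero
        (mul_ne_zero (Int.natCast_ne_zero.mpr he) hk)⟩, ?_⟩
      show ((e : ℤ) * k) • Additive.ofMul c = 0
      rw [← ofMul_zpow, h3]
      rfl
    have h5 : e • (⟨Additive.ofMul c, h4⟩ : ↥T) = 0 := hTe _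
    have h6 : e • Additive.ofMul c = 0 := congrArg Subtype.val h5
    have h7 : c ^ e = 1 := by
      have h8 : Additive.ofMul (c ^ e) = Additive.ofMul (1 : ↥B₁) := by simpa using h6
      exact Additive.ofMul.injective h8
    calc (c : X) ^ e = ((c ^ e : ↥B₁) : X) := by simp
    _ = 1 := by rw [h7]; rfl
  -- B₂ has finite index in X
  haveI hB₂fi : B₂.FiniteIndex := by
    haveI : (B₂.subgroupOf B₁).Normal := Subgroup.normal_of_comm _
    haveI : Group.FG (↥B₁ ⧸ B₂.subgroupOf B₁) :=
      Group.fg_of_surjective (QuotientGroup.mk'_surjective _)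
    letI : CommGroup (↥B₁ ⧸ B₂.subgroupOf B₁) := QuotientGroup.Quotient.commGroup _
    have htor : Monoid.IsTorsion (↥B₁ ⧸ B₂.subgroupOf B₁) := by
      intro g
      obtain ⟨b, rfl⟩ := QuotientGroup.mk'_surjective _ g
      refine isOfFinOrder_iff_pow_eq_one.mpr ⟨e, Nat.pos_of_ne_zero he, ?_⟩
      rw [← map_pow, QuotientGroup.mk'_apply, QuotientGroup.eq_one_iff]
      show ((b ^ e : ↥B₁) : X) ∈ B₂
      exact ⟨b, rfl⟩
    haveI : Finite (↥B₁ ⧸ B₂.subgroupOf B₁) := CommGroup.finite_of_fg_torsion _ htor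
    have hrel : B₂.relIndex B₁ ≠ 0 := Subgroup.index_ne_zero_of_finite
    have hmul := Subgroup.relIndex_mul_index hB₂B₁
    constructor
    rw [← hmul]
    exact Nat.mul_ne_zero hrel (Subgroup.FiniteIndex.index_ne_zero)
  -- commutative f.g. torsion-free structure on B₂
  letI : CommGroup ↥B₂ :=
    { (inferInstance : Group ↥B₂) with
      mul_comm := fun a b => Subtype.ext (hB₂comm a b a.2 b.2) }
  haveI : Group.FG ↥B₂ := Subgroup.fg_of_index_ne_zero B₂
  haveI : Module.Finite ℤ (Additive ↥B₂) :=
    Module.Finite.iff_addGroup_fg.mpr (GroupFG.iff_add_fg.mp inferInstance)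
  haveI : NoZeroSMulDivisors ℤ (Additive ↥B₂) := by
    constructor
    intro k v hkv
    rcases eq_or_ne k 0 with rfl | hk
    · exact Or.inl rfl
    right
    have h1 : Additive.toMul v ^ k = (1 : ↥B₂) := by
      apply Additive.ofMul.injective
      rw [ofMul_zpow]
      simpa using hkv
    have h2 : ((Additive.toMul v : ↥B₂) : X) ^ k = 1 := by
      rw [← SubgroupClass.coe_zpow, h1, OneMemClass.coe_one]
    have h3 : ((Additive.toMul v : ↥B₂) : X) = 1 := hTF _ (Additive.toMul v).2 k hk h2
    have h4 : Additive.toMul v = (1 : ↥B₂) := Subtype.ext h3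
    calc v = Additive.ofMul (Additive.toMul v) := rfl
    _ = Additive.ofMul (1 : ↥B₂) := by rw [h4]
    _ = 0 := rfl
  -- conjugation as linear automorphisms
  let Φ : X →* ((Additive ↥B₂) ≃ₗ[ℤ] (Additive ↥B₂)) :=
    { toFun := fun x => ((conjMulEquiv B₂ hB₂norm x).toAdditive).toIntLinearEquiv
      map_one' := by
        apply LinearEquiv.toLinearMap_injective
        apply LinearMap.ext
        intro v
        apply Subtype.ext
        show (1 : X) * ↑(Additive.toMul v) * (1 : X)⁻¹ = ↑(Additive.toMul v)
        group
      map_mul' := by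
        intro x y
        apply LinearEquiv.toLinearMap_injective
        apply LinearMap.ext
        intro v
        apply Subtype.ext
        show (x * y) * ↑(Additive.toMul v) * (x * y)⁻¹
          = x * (y * ↑(Additive.toMul v) * y⁻¹) * x⁻¹
        group }
  have hΦapply : ∀ (x : X) (v : Additive ↥B₂),
      ((Additive.toMul (Φ x v) : ↥B₂) : X) = x * ↑(Additive.toMul v) * x⁻¹ := fun x v => rfl
  -- the image of M under Φ is finite
  set Z := Subgroup.centralizer (B₂ : Set X) with hZ
  have hB₂Z : B₂ ≤ Z := fun b hb =>
    Subgroup.mem_centralizer_iff.mpr fun c hc => hB₂comm c b hc hb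
  haveI : Z.FiniteIndex := by
    constructor
    intro h0
    have hdvd := Subgroup.index_dvd_of_le hB₂Z
    rw [h0] at hdvd
    exact hB₂fi.index_ne_zero (Nat.eq_zero_of_zero_dvd hdvd)
  have hΦconst : ∀ x y : X, x⁻¹ * y ∈ Z → Φ x = Φ y := by
    intro x y hxy
    apply LinearEquiv.toLinearMap_injective
    apply LinearMap.ext
    intro v
    apply Subtype.ext
    show x * ↑(Additive.toMul v) * x⁻¹ = y * ↑(Additive.toMul v) * y⁻¹
    have hz := Subgroup.mem_centralizer_iff.mp hxy ↑(Additive.toMul v) (Additive.toMul v).2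
    -- hz : ↑(toMul v) * (x⁻¹ * y) = (x⁻¹ * y) * ↑(toMul v)
    have : y * ↑(Additive.toMul v) * y⁻¹
        = x * ((x⁻¹ * y) * ↑(Additive.toMul v) * (x⁻¹ * y)⁻¹) * x⁻¹ := by group
    rw [this, ← hz]
    group
  have hGfin : Finite ↥(Subgroup.map Φ M) := by
    let f : X ⧸ Z → ((Additive ↥B₂) ≃ₗ[ℤ] (Additive ↥B₂)) :=
      Quotient.lift Φ fun x y h => hΦconst x y (QuotientGroup.leftRel_apply.mp h)
    have hsub : (Subgroup.map Φ M : Set ((Additive ↥B₂) ≃ₗ[ℤ] (Additive ↥B₂)))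
        ⊆ Set.range f := by
      rintro g ⟨m, hm, rfl⟩
      exact ⟨QuotientGroup.mk m, rfl⟩
    exact ((Set.finite_range f).subset hsub).to_subtype
  -- the submodule corresponding to N ∩ B₂
  set Ngrp := N.subgroupOf B₂ with hNgrp
  set N₂ : Submodule ℤ (Additive ↥B₂) :=
    AddSubgroup.toIntSubmodule (Subgroup.toAddSubgroup Ngrp) with hN₂
  have hN₂mem : ∀ v : Additive ↥B₂, v ∈ N₂ ↔ ((Additive.toMul v : ↥B₂) : X) ∈ N := by
    intro v; rfl
  have hN₂inv : ∀ g ∈ Subgroup.map Φ M, ∀ v ∈ N₂, g v ∈ N₂ := by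
    rintro g ⟨m, hm, rfl⟩ v hv
    rw [hN₂mem] at hv ⊢
    rw [hΦapply]
    exact hNnorm m hm _ hv
  obtain ⟨C', hC'inv, hC'N, hC'fin⟩ :=
    module_complement (Subgroup.map Φ M) hGfin N₂ hN₂inv
  set Cgrp : Subgroup ↥B₂ :=
    (Subgroup.toAddSubgroup (G := ↥B₂)).symm (C'.toAddSubgroup) with hCgrp
  have hCgrpmem : ∀ b : ↥B₂, b ∈ Cgrp ↔ Additive.ofMul b ∈ C' := by
    intro b; rfl
  set C := Subgroup.map B₂.subtype Cgrp with hC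
  have hCmem : ∀ x : X, x ∈ C ↔ ∃ b : ↥B₂, b ∈ Cgrp ∧ (b : X) = x := by
    intro x
    constructor
    · rintro ⟨b, hb, rfl⟩; exact ⟨b, hb, rfl⟩
    · rintro ⟨b, hb, rfl⟩; exact ⟨b, hb, rfl⟩
  refine ⟨C, ?_, ?_, ?_⟩
  · -- invariance under conjugation by M
    intro m hm c hc
    obtain ⟨b, hb, rfl⟩ := (hCmem c).mp hc
    have h1 : Φ m (Additive.ofMul b) ∈ C' :=
      hC'inv _ ⟨m, hm, rfl⟩ _ ((hCgrpmem b).mp hb)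
    refine (hCmem _).mpr ⟨Additive.toMul (Φ m (Additive.ofMul b)), ?_, ?_⟩
    · exact h1
    · exact hΦapply m (Additive.ofMul b)
  · -- trivial intersection with N
    rw [eq_bot_iff]
    rintro x hx
    obtain ⟨b, hb, rfl⟩ := (hCmem x).mp hx.1
    have h1 : Additive.ofMul b ∈ C' ⊓ N₂ :=
      ⟨(hCgrpmem b).mp hb, (hN₂mem (Additive.ofMul b)).mpr hx.2⟩
    rw [hC'N] at h1
    have h2 : Additive.ofMul b = 0 := h1
    have h3 : b = 1 := Additive.ofMul.injective h2
    rw [h3]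
    simp
  · -- finite index of C ⊔ N
    set Dgrp : Subgroup ↥B₂ := Cgrp ⊔ Ngrp with hDgrp
    have hDmem : ∀ b : ↥B₂, b ∈ Dgrp ↔ Additive.ofMul b ∈ C' ⊔ N₂ := by
      intro b
      rw [hDgrp, Subgroup.mem_sup, Submodule.mem_sup]
      constructor
      · rintro ⟨y, hy, z, hz, rfl⟩
        exact ⟨Additive.ofMul y, (hCgrpmem y).mp hy, Additive.ofMul z, hz, rfl⟩
      · rintro ⟨u, hu, w, hw, huw⟩
        refine ⟨Additive.toMul u, (hCgrpmem _).mpr hu, Additive.toMul w, hw, ?_⟩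
        exact Additive.ofMul.injective huw
    haveI hDgrpfin : Finite (↥B₂ ⧸ Dgrp) := by
      haveI := hC'fin
      have hcompat : ∀ a b : Additive ↥B₂, (C' ⊔ N₂).quotientRel a b →
          (QuotientGroup.leftRel Dgrp) (Additive.toMul a) (Additive.toMul b) := by
        intro a b hab
        rw [Submodule.quotientRel_def] at hab
        rw [QuotientGroup.leftRel_apply]
        have h1 : (Additive.toMul a)⁻¹ * Additive.toMul b = Additive.toMul (b - a) := by
          rw [toMul_sub, div_eq_mul_inv, mul_comm]
        rw [h1]
        refine (hDmem _).mpr ?_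
        have : b - a = -(a - b) := by abel
        rw [this]
        exact neg_mem hab
      refine Finite.of_surjective
        (Quotient.map' (fun a : Additive ↥B₂ => Additive.toMul a) hcompat) ?_
      intro q
      obtain ⟨b, rfl⟩ := QuotientGroup.mk'_surjective Dgrp q
      refine ⟨Quotient.mk'' (Additive.ofMul b), ?_⟩
      rw [Quotient.map'_mk'']
      rfl
    haveI hDgrpfi : Dgrp.FiniteIndex := Subgroup.finiteIndex_of_finite_quotient (H := Dgrp)
    set D := Subgroup.map B₂.subtype Dgrp with hD
    have hDle : D ≤ C ⊔ N := by
      rw [hD, hDgrp, Subgroup.map_sup]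
      refine sup_le_sup le_rfl ?_
      rw [hNgrp, Subgroup.subgroupOf_map_subtype]
      exact inf_le_left
    have hDsub : D.subgroupOf B₂ = Dgrp :=
      Subgroup.comap_map_eq_self_of_injective B₂.subtype_injective Dgrp
    have hDfi : D.FiniteIndex := by
      constructor
      have hmul := Subgroup.relIndex_mul_index (Subgroup.map_subtype_le Dgrp : D ≤ B₂)
      rw [← hmul]
      have hrel : D.relIndex B₂ ≠ 0 := by
        show (D.subgroupOf B₂).index ≠ 0
        rw [hDsub]
        exact hDgrpfi.index_ne_zero
      exact Nat.mul_ne_zero hrel hB₂fi.index_ne_zero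
    constructor
    intro h0
    have hdvd := Subgroup.index_dvd_of_le hDle
    rw [h0] at hdvd
    exact hDfi.index_ne_zero (Nat.eq_zero_of_zero_dvd hdvd)

/-- Lemma 5.9: if `X` is finitely generated virtually abelian, `Y` is any group and
`H ≤ X × Y` projects to a virtual retract of `Y`, then `H` is a virtual retract of `X × Y`. -/
theorem virtualRetract_of_projection_virtualRetract {X Y : Type*} [Group X] [Group Y]
    (hXfg : Group.FG X) (hXva : VirtuallyAbelian X) (H : Subgroup (X × Y))
    (h : IsVirtualRetract (Subgroup.map (MonoidHom.snd X Y) H)) :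
    IsVirtualRetract H := by

  classical
  obtain ⟨L, hAL, hLfi, σ, hσmem, hσid⟩ := h
  set A := Subgroup.map (MonoidHom.snd X Y) H with hA
  -- projections of H
  set M := Subgroup.map (MonoidHom.fst X Y) H with hM
  set N := Subgroup.comap (MonoidHom.inl X Y) H with hN
  have hNmem : ∀ x : X, x ∈ N ↔ ((x, (1 : Y)) : X × Y) ∈ H := fun x => Iff.rfl
  have hNM : N ≤ M := by
    intro x hx
    exact ⟨(x, 1), (hNmem x).mp hx, rfl⟩
  have hNnorm : ∀ m ∈ M, ∀ n ∈ N, m * n * m⁻¹ ∈ N := by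
    rintro m ⟨⟨m', y⟩, hmy, rfl⟩ n hn
    rw [hNmem]
    have := mul_mem (mul_mem hmy ((hNmem n).mp hn)) (inv_mem hmy)
    convert this using 2 <;> simp
  obtain ⟨C, hCinv, hCN, hRfi⟩ := key_complement hXfg hXva M N hNM hNnorm
  set R := C ⊔ N with hR
  -- the subgroup Ĉ = C × (kernel of σ)
  set Kσ : Subgroup Y := Subgroup.map L.subtype σ.ker with hKσ
  have hKσmem : ∀ y : Y, y ∈ Kσ ↔ ∃ hy : y ∈ L, σ ⟨y, hy⟩ = 1 := by
    intro y
    constructor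
    · rintro ⟨u, hu, rfl⟩
      exact ⟨u.2, hu⟩
    · rintro ⟨hy, hσy⟩
      exact ⟨⟨y, hy⟩, hσy, rfl⟩
  set Chat : Subgroup (X × Y) := C.prod Kσ with hChat
  have hAmem : ∀ p : X × Y, p ∈ H → p.2 ∈ A := fun p hp => ⟨p, hp, rfl⟩
  have hMmem : ∀ p : X × Y, p ∈ H → p.1 ∈ M := fun p hp => ⟨p, hp, rfl⟩
  have hσA : ∀ y (hy : y ∈ A), σ ⟨y, hAL hy⟩ = y := hσid
  have hHnorm : ∀ h ∈ H, ∀ c ∈ Chat, h * c * h⁻¹ ∈ Chat := by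
    rintro ⟨m, a⟩ hma ⟨c, u⟩ hcu
    obtain ⟨hc, hu⟩ := hcu
    have ha : a ∈ A := hAmem _ hma
    obtain ⟨hu1, hu2⟩ := (hKσmem u).mp hu
    constructor
    · show m * c * m⁻¹ ∈ C
      exact hCinv m (hMmem _ hma) c hc
    · show a * u * a⁻¹ ∈ Kσ
      rw [hKσmem]
      have haL : a ∈ L := hAL ha
      refine ⟨mul_mem (mul_mem haL hu1) (inv_mem haL), ?_⟩
      have hsplit : (⟨a * u * a⁻¹, _⟩ : ↥L) = ⟨a, haL⟩ * ⟨u, hu1⟩ * (⟨a, haL⟩)⁻¹ := rfl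
      rw [hsplit, map_mul, map_mul, map_inv, hu2, hσA a ha]
      group
  have hint : Chat ⊓ H = ⊥ := by
    rw [eq_bot_iff]
    rintro ⟨x, y⟩ ⟨⟨hxC, hyK⟩, hxyH⟩
    have hyA : y ∈ A := hAmem _ hxyH
    obtain ⟨hy1, hy2⟩ := (hKσmem y).mp hyK
    have hy3 : y = 1 := by
      have := hσA y hyA
      rw [show (⟨y, hAL hyA⟩ : ↥L) = ⟨y, hy1⟩ from rfl] at this
      rw [hy2] at this
      exact this.symm
    subst hy3
    have hxN : x ∈ N := (hNmem x).mpr hxyH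
    have : x ∈ C ⊓ N := ⟨hxC, hxN⟩
    rw [hCN] at this
    have hx1 : x = 1 := this
    subst hx1
    exact Subgroup.mem_bot.mpr rfl
  obtain ⟨ρ, hρmem, hρid⟩ := retract_of_complement Chat H hHnorm hint
  -- finite index of Chat ⊔ H
  haveI := hLfi
  haveI := hRfi
  have hKfi : (Chat ⊔ H).FiniteIndex := by
    have hfinq : Finite ((X × Y) ⧸ (Chat ⊔ H)) := by
      have hNnormC : ∀ n ∈ N, ∀ c ∈ C, n * c * n⁻¹ ∈ C := fun n hn c hc =>
        hCinv n (hNM hn) c hc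
      refine Finite.of_surjective
        (fun p : (X ⧸ R) × (Y ⧸ L) => (QuotientGroup.mk (p.1.out, p.2.out) : (X × Y) ⧸ (Chat ⊔ H))) ?_
      intro q
      obtain ⟨⟨x, y⟩, rfl⟩ := QuotientGroup.mk_surjective q
      set β : Y ⧸ L := QuotientGroup.mk y with hβ
      set y₀ := β.out with hy₀
      have hβeq : (QuotientGroup.mk y₀ : Y ⧸ L) = QuotientGroup.mk y := by
        rw [hy₀, hβ]; exact Quotient.out_eq _
      have hl : y₀⁻¹ * y ∈ L := QuotientGroup.eq.mp hβeq
      set a := σ ⟨y₀⁻¹ * y, hl⟩ with haDef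
      have haA : a ∈ A := hσmem _
      obtain ⟨⟨m, a'⟩, hmaH, ha'⟩ := id haA
      have hmaH2 : ((m, a) : X × Y) ∈ H := by
        have : ((m, a') : X × Y) = (m, a) := by rw [show a' = a from ha']
        rwa [this] at hmaH
      set α : X ⧸ R := QuotientGroup.mk (x * m⁻¹) with hα
      set x₀ := α.out with hx₀
      have hαeq : (QuotientGroup.mk x₀ : X ⧸ R) = QuotientGroup.mk (x * m⁻¹) := by
        rw [hx₀, hα]; exact Quotient.out_eq _
      have hw : x₀⁻¹ * (x * m⁻¹) ∈ R := QuotientGroup.eq.mp hαeq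
      obtain ⟨c, hc, n, hn, hcn⟩ := sup_decomp C N hNnormC _ hw
      refine ⟨(α, β), ?_⟩
      show (QuotientGroup.mk (α.out, β.out) : (X × Y) ⧸ (Chat ⊔ H)) = QuotientGroup.mk (x, y)
      rw [QuotientGroup.eq]
      have hfactor : ((x₀, y₀) : X × Y)⁻¹ * (x, y)
          = ((c, (y₀⁻¹ * y) * a⁻¹) : X × Y) * ((n * m, a) : X × Y) := by
        have h1 : x₀⁻¹ * x = c * (n * m) := by
          have : x₀⁻¹ * (x * m⁻¹) * m = x₀⁻¹ * x := by group
          rw [← this, hcn]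
          group
        have h2 : y₀⁻¹ * y = ((y₀⁻¹ * y) * a⁻¹) * a := by group
        ext
        · show x₀⁻¹ * x = c * (n * m); exact h1
        · show y₀⁻¹ * y = ((y₀⁻¹ * y) * a⁻¹) * a; exact h2
      rw [show ((x₀, y₀) : X × Y) = (α.out, β.out) from rfl] at hfactor
      rw [hfactor]
      refine mul_mem (Subgroup.mem_sup_left ?_) (Subgroup.mem_sup_right ?_)
      · constructor
        · exact hc
        · show (y₀⁻¹ * y) * a⁻¹ ∈ Kσ
          rw [hKσmem]
          refine ⟨mul_mem hl (inv_mem (hAL haA)), ?_⟩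
          have hsplit : (⟨(y₀⁻¹ * y) * a⁻¹, _⟩ : ↥L)
              = ⟨y₀⁻¹ * y, hl⟩ * (⟨a, hAL haA⟩)⁻¹ := rfl
          rw [hsplit, map_mul, map_inv, ← haDef, hσA a haA]
          group
      · have h3 : ((n, (1 : Y)) : X × Y) ∈ H := (hNmem n).mp hn
        have := mul_mem h3 hmaH2
        convert this using 2 <;> simp
    exact Subgroup.finiteIndex_of_finite_quotient
  exact ⟨Chat ⊔ H, le_sup_right, hKfi, ρ, hρmem, hρid⟩
end

section
/- Let G be a group with property (VRC) which contains a torsion-free subgroup of finite index and which is not virtually abelian. Then the first virtual betti number of G is infinite: for every n ∈ ℕ there exists a finite-index subgroup K of G whose first betti number b₁(K) = dim_ℚ((K/[K,K]) ⊗_ℤ ℚ) is at least n. -/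
/-- Property (VRC): every cyclic subgroup is a virtual retract. -/
def VRC (G : Type*) [Group G] : Prop :=
  ∀ g : G, IsVirtualRetract (Subgroup.zpowers g)

open scoped TensorProduct
open scoped commutatorElement

section Aux

variable {G : Type*} [Group G]

/-- The joint evaluation map of a family of homomorphisms to `ℚ`. -/
def jointMap {H : Type*} [Group H] {m : ℕ} (f : Fin m → (H →* Multiplicative ℚ)) :
    H → (Fin m → ℚ) := fun x i => Multiplicative.toAdd (f i x)

/-- `Bge K m` : there are `m` homomorphisms `K → ℚ` whose joint map spans `ℚ^m`. -/
def Bge (K : Subgroup G) (m : ℕ) : Prop :=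
  ∃ f : Fin m → (↥K →* Multiplicative ℚ),
    Submodule.span ℚ (Set.range (jointMap f)) = ⊤

/-- The `ℚ`-linear functional on `ℚ ⊗ℤ K_ab` induced by a homomorphism `K → ℚ`. -/
noncomputable def homFunctional {H : Type*} [Group H] (f : H →* Multiplicative ℚ) :
    ℚ ⊗[ℤ] Additive (Abelianization H) →ₗ[ℚ] ℚ :=
  TensorProduct.AlgebraTensorModule.lift
    (LinearMap.toSpanSingleton ℚ (Additive (Abelianization H) →ₗ[ℤ] ℚ)
      ((MonoidHom.toAdditiveLeft (Abelianization.lift f)).toIntLinearMap))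

lemma homFunctional_apply {H : Type*} [Group H] (f : H →* Multiplicative ℚ) (x : H) :
    homFunctional f ((1 : ℚ) ⊗ₜ[ℤ] Additive.ofMul (Abelianization.of x))
      = Multiplicative.toAdd (f x) := by
  simp [homFunctional, TensorProduct.AlgebraTensorModule.lift_tmul]

lemma rank_of_Bge {K : Subgroup G} {m : ℕ} (h : Bge K m) :
    (m : Cardinal) ≤ Module.rank ℚ (ℚ ⊗[ℤ] Additive (Abelianization ↥K)) := by
  obtain ⟨f, hf⟩ := h
  set Φ : (ℚ ⊗[ℤ] Additive (Abelianization ↥K)) →ₗ[ℚ] (Fin m → ℚ) :=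
    LinearMap.pi (fun i : Fin m => homFunctional (f i)) with hΦ
  have hsurj : Function.Surjective Φ := by
    rw [← LinearMap.range_eq_top, eq_top_iff, ← hf]
    refine Submodule.span_le.mpr ?_
    rintro _ ⟨x, rfl⟩
    refine ⟨(1 : ℚ) ⊗ₜ[ℤ] Additive.ofMul (Abelianization.of x), ?_⟩
    funext i
    simp only [hΦ, LinearMap.pi_apply]
    exact homFunctional_apply (f i) x
  have h2 := Φ.lift_rank_le_of_surjective hsurj
  rw [rank_fin_fun] at h2
  simpa using h2

lemma restrict_span {L K : Subgroup G} (hLK : L ≤ K) (hL : L.index ≠ 0) {m : ℕ}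
    (f : Fin m → (↥K →* Multiplicative ℚ))
    (hf : Submodule.span ℚ (Set.range (jointMap f)) = ⊤) :
    Submodule.span ℚ
      (Set.range (jointMap (fun i => (f i).comp (Subgroup.inclusion hLK)))) = ⊤ := by
  set f' := fun i => (f i).comp (Subgroup.inclusion hLK) with hf'
  rw [eq_top_iff, ← hf]
  refine Submodule.span_le.mpr ?_
  rintro _ ⟨x, rfl⟩
  obtain ⟨j, hj0, _, hjL⟩ := Subgroup.exists_pow_mem_of_index_ne_zero hL (x : G)
  have key : jointMap f' (⟨(x : G) ^ j, hjL⟩ : ↥L) = (j : ℚ) • jointMap f x := by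
    funext i
    have hincl : (Subgroup.inclusion hLK) (⟨(x : G) ^ j, hjL⟩ : ↥L) = x ^ j := by
      ext; simp
    simp only [jointMap, hf', MonoidHom.comp_apply, hincl, map_pow, Pi.smul_apply,
      smul_eq_mul, toAdd_pow, nsmul_eq_mul]
  have : jointMap f x = (j : ℚ)⁻¹ • jointMap f' (⟨(x : G) ^ j, hjL⟩ : ↥L) := by
    rw [key, smul_smul, inv_mul_cancel₀ (by exact_mod_cast hj0.ne'), one_smul]
  rw [this]
  exact Submodule.smul_mem _ _ (Submodule.subset_span ⟨_, rfl⟩)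

/-- From a virtual retraction onto an infinite cyclic subgroup, build a rational character
taking value `1` at the generator. -/
lemma exists_psi {g : G} (hg : ¬ IsOfFinOrder g) (L : Subgroup G) (hgL : g ∈ L)
    (φ : ↥L →* G) (hmem : ∀ x : ↥L, φ x ∈ Subgroup.zpowers g) (hid : φ ⟨g, hgL⟩ = g) :
    ∃ ψ : ↥L →* Multiplicative ℚ, Multiplicative.toAdd (ψ ⟨g, hgL⟩) = 1 := by
  classical
  have hinj : Function.Injective (fun n : ℤ => g ^ n) :=
    injective_zpow_iff_not_isOfFinOrder.mpr hg
  have hc : ∀ x : ↥L, ∃ k : ℤ, g ^ k = φ x := fun x =>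
    Subgroup.mem_zpowers_iff.mp (hmem x)
  set c : ↥L → ℤ := fun x => (hc x).choose with hcdef
  have hspec : ∀ x : ↥L, g ^ c x = φ x := fun x => (hc x).choose_spec
  have hadd : ∀ x y : ↥L, c (x * y) = c x + c y := by
    intro x y
    apply hinj
    show g ^ c (x * y) = g ^ (c x + c y)
    rw [hspec, map_mul, zpow_add, hspec, hspec]
  refine ⟨{ toFun := fun x => Multiplicative.ofAdd ((c x : ℚ))
            map_one' := ?_
            map_mul' := ?_ }, ?_⟩
  · have : c 1 = 0 := by
      apply hinj
      show g ^ c 1 = g ^ (0 : ℤ)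
      rw [hspec, map_one, zpow_zero]
    simp [this]
  · intro x y
    have := hadd x y
    simp only [this, Int.cast_add, ofAdd_add]
  · have : c ⟨g, hgL⟩ = 1 := by
      apply hinj
      show g ^ c ⟨g, hgL⟩ = g ^ (1 : ℤ)
      rw [hspec, hid, zpow_one]
    simp [this]

end Aux

/-- Proposition 5.11: a virtually torsion-free group with (VRC) which is not virtually abelian
has infinite first virtual betti number. -/
theorem infinite_virtual_betti_number_of_VRC {G : Type*} [Group G] (hVRC : VRC G)
    (htf : ∃ T : Subgroup G, T.FiniteIndex ∧ ∀ g ∈ T, IsOfFinOrder g → g = 1)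
    (hnva : ¬ VirtuallyAbelian G) :
    ∀ n : ℕ, ∃ K : Subgroup G, K.FiniteIndex ∧
      (n : Cardinal) ≤ Module.rank ℚ (ℚ ⊗[ℤ] Additive (Abelianization ↥K)) := by
  classical
  intro n
  by_contra hcon
  push_neg at hcon
  set P : ℕ → Prop := fun m => ∃ K : Subgroup G, K.FiniteIndex ∧ Bge K m with hP
  have hP0 : P 0 := by
    refine ⟨⊤, inferInstance, fun i => i.elim0, ?_⟩
    rw [eq_top_iff]
    intro w _
    have : w = 0 := funext fun i => i.elim0
    rw [this]; exact Submodule.zero_mem _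
  have hPn : ¬ P n := by
    rintro ⟨K, hKfi, hB⟩
    exact absurd (rank_of_Bge hB) (not_le.mpr (hcon K hKfi))
  set M := Nat.findGreatest P n with hM
  have hPM : P M := Nat.findGreatest_spec (Nat.zero_le n) hP0
  have hMn : M < n := lt_of_le_of_ne (Nat.findGreatest_le n) (fun e => hPn (e ▸ hPM))
  have hPM1 : ¬ P (M + 1) := Nat.findGreatest_is_greatest (Nat.lt_succ_self M) hMn
  obtain ⟨K, hKfi, f, hspan⟩ := hPM
  obtain ⟨T, hTfi, hT⟩ := htf
  haveI := hKfi; haveI := hTfi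
  apply hnva
  refine ⟨K ⊓ T, inferInstance, ?_⟩
  intro a b
  have haK : (a : G) ∈ K := a.2.1
  have hbK : (b : G) ∈ K := b.2.1
  have haT : (a : G) ∈ T := a.2.2
  have hbT : (b : G) ∈ T := b.2.2
  set g : G := ⁅(a : G), (b : G)⁆ with hgdef
  have hgK : g ∈ K :=
    K.mul_mem (K.mul_mem (K.mul_mem haK hbK) (K.inv_mem haK)) (K.inv_mem hbK)
  have hgT : g ∈ T :=
    T.mul_mem (T.mul_mem (T.mul_mem haT hbT) (T.inv_mem haT)) (T.inv_mem hbT)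
  have hgone : g = 1 := by
    by_contra hgne
    have hgord : ¬ IsOfFinOrder g := fun h => hgne (hT g hgT h)
    obtain ⟨K', hK'le, hK'fi, ρ, hρmem, hρid⟩ := hVRC g
    haveI := hK'fi
    set L : Subgroup G := K ⊓ K' with hLdef
    have hgL : g ∈ L := ⟨hgK, hK'le (Subgroup.mem_zpowers g)⟩
    haveI : L.FiniteIndex := inferInstance
    set φ : ↥L →* G := ρ.comp (Subgroup.inclusion inf_le_right) with hφ
    have hmem : ∀ x : ↥L, φ x ∈ Subgroup.zpowers g := fun x => hρmem _
    have hid : φ ⟨g, hgL⟩ = g := hρid g (Subgroup.mem_zpowers g)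
    obtain ⟨ψ, hψg⟩ := exists_psi hgord L hgL φ hmem hid
    set f' : Fin M → (↥L →* Multiplicative ℚ) :=
      fun i => (f i).comp (Subgroup.inclusion (inf_le_left : L ≤ K)) with hf'def
    have hspan' : Submodule.span ℚ (Set.range (jointMap f')) = ⊤ :=
      restrict_span inf_le_left Subgroup.FiniteIndex.index_ne_zero f hspan
    set F : Fin (M + 1) → (↥L →* Multiplicative ℚ) := Fin.snoc f' ψ with hFdef
    set V := Submodule.span ℚ (Set.range (jointMap F)) with hVdef
    set q : (Fin (M + 1) → ℚ) →ₗ[ℚ] (Fin M → ℚ) :=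
      LinearMap.funLeft ℚ ℚ Fin.castSucc with hq
    have hqjm : ∀ x : ↥L, q (jointMap F x) = jointMap f' x := by
      intro x
      funext i
      simp only [hq, LinearMap.funLeft_apply, jointMap, hFdef, Fin.snoc_castSucc]
    have hmapV : Submodule.map q V = ⊤ := by
      rw [hVdef, Submodule.map_span, eq_top_iff, ← hspan']
      refine Submodule.span_mono ?_
      rintro _ ⟨x, rfl⟩
      exact ⟨jointMap F x, ⟨x, rfl⟩, hqjm x⟩
    have hgcoord : ∀ i : Fin M, jointMap F (⟨g, hgL⟩ : ↥L) (Fin.castSucc i) = 0 := by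
      intro i
      have : f' i ⟨g, hgL⟩ = 1 := by
        have hincl : (Subgroup.inclusion (inf_le_left : L ≤ K)) (⟨g, hgL⟩ : ↥L)
            = ⁅(⟨(a : G), haK⟩ : ↥K), (⟨(b : G), hbK⟩ : ↥K)⁆ := by
          ext; rfl
        rw [hf'def]
        simp only [MonoidHom.comp_apply, hincl, map_commutatorElement]
        exact commutatorElement_eq_one_iff_mul_comm.mpr (mul_comm _ _)
      simp only [jointMap, hFdef, Fin.snoc_castSucc, this, toAdd_one]
    set e : Fin (M + 1) → ℚ := Pi.single (Fin.last M) (1 : ℚ) with he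
    have hgE : jointMap F (⟨g, hgL⟩ : ↥L) = e := by
      funext j
      induction j using Fin.lastCases with
      | last =>
        simp only [jointMap, hFdef, Fin.snoc_last, he, Pi.single_eq_same]
        exact hψg
      | cast i =>
        rw [hgcoord i]
        rw [he]
        exact (Pi.single_eq_of_ne (M := fun _ : Fin (M + 1) => ℚ)
          (Fin.castSucc_lt_last i).ne (1 : ℚ)).symm
    have hEV : e ∈ V := by
      rw [← hgE]; exact Submodule.subset_span ⟨_, rfl⟩
    have hVtop : V = ⊤ := by
      rw [eq_top_iff]
      intro w _
      have hw : q w ∈ Submodule.map q V := by rw [hmapV]; trivial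
      obtain ⟨v, hv, hqv⟩ := hw
      have hdiff : w - v = (w - v) (Fin.last M) • e := by
        funext j
        induction j using Fin.lastCases with
        | last => simp [he]
        | cast i =>
          have h2 : w (Fin.castSucc i) - v (Fin.castSucc i) = 0 := by
            have : q (w - v) i = 0 := by rw [map_sub, hqv, sub_self]; rfl
            exact this
          have h3 : e (Fin.castSucc i) = 0 := by
            rw [he]
            exact Pi.single_eq_of_ne (M := fun _ : Fin (M + 1) => ℚ)
              (Fin.castSucc_lt_last i).ne (1 : ℚ)
          simp only [Pi.sub_apply, Pi.smul_apply, h3, smul_eq_mul, mul_zero, h2]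
      have : w = v + (w - v) (Fin.last M) • e := by
        rw [← hdiff]; abel
      rw [this]
      exact Submodule.add_mem _ hv (Submodule.smul_mem _ _ hEV)
    exact hPM1 ⟨L, inferInstance, F, hVtop⟩
  have : (a : G) * (b : G) = (b : G) * (a : G) :=
    commutatorElement_eq_one_iff_mul_comm.mp hgone
  exact Subtype.ext this
end

section
/- Let G be a group and let g ∈ G be an element of infinite order such that the cyclic subgroup ⟨g⟩ is a virtual retract of G. Then g is quasi-potent in G: there exists n ∈ ℕ, n ≥ 1, such that for every k ∈ ℕ, k ≥ 1, there exist a finite group M and a homomorphism ψ : G → M such that the order of ψ(g) in M is exactly kn. -/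
private lemma finset_lcm_mul_distrib {ι : Type*} [DecidableEq ι] (d : ℕ) (F : ι → ℕ) :
    ∀ (s : Finset ι), s.Nonempty → s.lcm (fun i => d * F i) = d * s.lcm F := by
  intro s
  induction s using Finset.induction_on with
  | empty => exact fun h => absurd h (by simp)
  | @insert a s ha ih =>
    intro _
    rcases s.eq_empty_or_nonempty with rfl | hs
    · simp only [Finset.lcm_insert, Finset.lcm_empty]
      rw [lcm_one_right, lcm_one_right, normalize_eq, normalize_eq]
    · rw [Finset.lcm_insert, Finset.lcm_insert, ih hs]
      rw [show (lcm (d * F a) (d * s.lcm F) : ℕ) = Nat.lcm (d * F a) (d * s.lcm F) from rfl,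
        Nat.lcm_mul_left]
      rfl

/-- Lemma 8.2: if `g ∈ G` has infinite order and `⟨g⟩ ≤vr G`, then `g` is quasi-potent:
there is `n ≥ 1` such that for every `k ≥ 1` some homomorphism to a finite group sends `g`
to an element of order exactly `k * n`. -/
theorem quasiPotent_of_virtualRetract_zpowers {G : Type*} [Group G] (g : G)
    (hg : ¬ IsOfFinOrder g) (hvr : IsVirtualRetract (Subgroup.zpowers g)) :
    ∃ n : ℕ, 1 ≤ n ∧ ∀ k : ℕ, 1 ≤ k →
      ∃ (M : Type) (_ : Group M) (_ : Finite M) (ψ : G →* M),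
        orderOf (ψ g) = k * n := by
  classical
  obtain ⟨K, hHK, hKfi, ρ, hρmem, hρid⟩ := hvr
  haveI := hKfi
  have hgK : g ∈ K := hHK (Subgroup.mem_zpowers g)
  have hginj : Function.Injective fun m : ℤ => g ^ m :=
    injective_zpow_iff_not_isOfFinOrder.mpr hg
  choose f hf using fun y : K => Subgroup.mem_zpowers_iff.mp (hρmem y)
  have hconj : ∀ (x a : G) (j : ℤ), (x⁻¹ * a * x) ^ j = x⁻¹ * a ^ j * x := by
    intro x a j
    have h := conj_zpow (i := j) (a := x⁻¹) (b := a)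
    rwa [inv_inv] at h
  have hf_mul : ∀ y z : K, f (y * z) = f y + f z := by
    intro y z
    apply hginj
    show g ^ f (y * z) = g ^ (f y + f z)
    rw [hf, map_mul, zpow_add, hf, hf]
  have hf_zpow : ∀ (y : K) (j : ℤ), f (y ^ j) = j * f y := by
    intro y j
    apply hginj
    show g ^ f (y ^ j) = g ^ (j * f y)
    rw [hf, map_zpow, mul_comm, zpow_mul, hf]
  have hf_conj : ∀ (y z : K), f (z⁻¹ * y * z) = f y := by
    intro y z
    have h1 := hf_mul (z⁻¹ * y) z
    rw [hf_mul z⁻¹ y] at h1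
    have h0 : f (1 : K) = 0 := by
      apply hginj
      show g ^ f (1 : K) = g ^ (0 : ℤ)
      rw [hf, map_one, zpow_zero]
    have hzinv : f z⁻¹ = - f z := by
      have h2 : f (z⁻¹ * z) = f z⁻¹ + f z := hf_mul _ _
      rw [inv_mul_cancel, h0] at h2
      omega
    omega
  -- minimal positive power of `g` whose `x`-conjugate lies in `K`
  have hcex : ∀ x : G, ∃ cc : ℕ, 0 < cc ∧ x⁻¹ * g ^ (cc : ℤ) * x ∈ K := by
    intro x
    obtain ⟨a, b, hab, he⟩ := Finite.exists_ne_map_eq_of_infinite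
      (fun m : ℕ => ((g ^ m * x : G) : G ⧸ K))
    rcases Ne.lt_or_gt hab with h | h
    · refine ⟨b - a, by omega, ?_⟩
      have hm := QuotientGroup.eq.mp he
      have heq : x⁻¹ * g ^ ((b - a : ℕ) : ℤ) * x = (g ^ a * x)⁻¹ * (g ^ b * x) := by
        push_cast [Nat.cast_sub h.le]
        rw [zpow_sub, ← zpow_natCast g a, ← zpow_natCast g b]
        group
      rw [heq]; exact hm
    · refine ⟨a - b, by omega, ?_⟩
      have hm := QuotientGroup.eq.mp he.symm
      have heq : x⁻¹ * g ^ ((a - b : ℕ) : ℤ) * x = (g ^ b * x)⁻¹ * (g ^ a * x) := by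
        push_cast [Nat.cast_sub h.le]
        rw [zpow_sub, ← zpow_natCast g a, ← zpow_natCast g b]
        group
      rw [heq]; exact hm
  let c : G → ℕ := fun x => Nat.find (hcex x)
  have hc_pos : ∀ x, 0 < c x := fun x => (Nat.find_spec (hcex x)).1
  have hc_mem : ∀ x, x⁻¹ * g ^ (c x : ℤ) * x ∈ K := fun x => (Nat.find_spec (hcex x)).2
  have hdvdmem : ∀ (x : G) (j : ℤ), x⁻¹ * g ^ ((c x : ℤ) * j) * x ∈ K := by
    intro x j
    have he : x⁻¹ * g ^ ((c x : ℤ) * j) * x = (x⁻¹ * g ^ (c x : ℤ) * x) ^ j := by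
      rw [hconj, zpow_mul]
    rw [he]
    exact Subgroup.zpow_mem K (hc_mem x) j
  have hcK : ∀ (x : G) (m : ℤ), x⁻¹ * g ^ m * x ∈ K ↔ (c x : ℤ) ∣ m := by
    intro x m
    constructor
    · intro hm
      have hcz : (c x : ℤ) ≠ 0 := by exact_mod_cast (hc_pos x).ne'
      have hr0 : 0 ≤ m % (c x : ℤ) := Int.emod_nonneg m hcz
      have hrlt : m % (c x : ℤ) < (c x : ℤ) := Int.emod_lt_of_pos m (by exact_mod_cast hc_pos x)
      have hmem_r : x⁻¹ * g ^ (m % (c x : ℤ)) * x ∈ K := by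
        have hid : x⁻¹ * g ^ (m % (c x : ℤ)) * x
            = (x⁻¹ * g ^ m * x) * (x⁻¹ * g ^ ((c x : ℤ) * (m / (c x : ℤ))) * x)⁻¹ := by
          rw [Int.emod_def, zpow_sub]
          group
        rw [hid]
        exact mul_mem hm (inv_mem (hdvdmem x _))
      by_contra hnd
      have hrne : m % (c x : ℤ) ≠ 0 := by
        intro h0
        exact hnd (Int.dvd_of_emod_eq_zero h0)
      have hlt : (m % (c x : ℤ)).toNat < c x := by omega
      have := Nat.find_min (hcex x) hlt
      apply this
      refine ⟨by omega, ?_⟩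
      rw [Int.toNat_of_nonneg hr0]
      exact hmem_r
    · rintro ⟨j, rfl⟩
      exact hdvdmem x j
  -- the "weight" of the minimal conjugated power under the retraction
  let t : G → ℤ := fun x => f ⟨x⁻¹ * g ^ (c x : ℤ) * x, hc_mem x⟩
  have hft : ∀ (x : G) (j : ℤ) (h : x⁻¹ * g ^ ((c x : ℤ) * j) * x ∈ K),
      f ⟨x⁻¹ * g ^ ((c x : ℤ) * j) * x, h⟩ = j * t x := by
    intro x j h
    have hsub : (⟨x⁻¹ * g ^ ((c x : ℤ) * j) * x, h⟩ : K)
        = (⟨x⁻¹ * g ^ (c x : ℤ) * x, hc_mem x⟩ : K) ^ j := by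
      apply Subtype.ext
      show x⁻¹ * g ^ ((c x : ℤ) * j) * x = (((⟨x⁻¹ * g ^ (c x : ℤ) * x, hc_mem x⟩ : K) ^ j : K) : G)
      rw [SubgroupClass.coe_zpow]
      rw [hconj, zpow_mul]
    rw [hsub, hf_zpow]
  have hc_coset : ∀ (x y : G), y ∈ K → c (x * y) = c x := by
    intro x y hy
    have hiff : ∀ m : ℤ, (((x * y)⁻¹ * g ^ m * (x * y) ∈ K)) ↔ (x⁻¹ * g ^ m * x ∈ K) := by
      intro m
      have hrw : (x * y)⁻¹ * g ^ m * (x * y) = y⁻¹ * (x⁻¹ * g ^ m * x) * y := by group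
      rw [hrw]
      constructor
      · intro h
        have h2 := mul_mem (mul_mem hy h) (inv_mem hy)
        rwa [show y * (y⁻¹ * (x⁻¹ * g ^ m * x) * y) * y⁻¹ = x⁻¹ * g ^ m * x by group] at h2
      · intro h
        exact mul_mem (mul_mem (inv_mem hy) h) hy
    have h1 : (c (x * y) : ℤ) ∣ (c x : ℤ) := by
      rw [← hcK (x * y) (c x), hiff]
      exact hc_mem x
    have h2 : (c x : ℤ) ∣ (c (x * y) : ℤ) := by
      rw [← hcK x (c (x * y)), ← hiff]
      exact hc_mem (x * y)
    exact Nat.dvd_antisymm (Int.natCast_dvd_natCast.mp h1) (Int.natCast_dvd_natCast.mp h2)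
  have ht_coset : ∀ (x y : G), y ∈ K → t (x * y) = t x := by
    intro x y hy
    have hcc : c (x * y) = c x := hc_coset x y hy
    have hsub : (⟨(x * y)⁻¹ * g ^ (c (x * y) : ℤ) * (x * y), hc_mem (x * y)⟩ : K)
        = (⟨y, hy⟩ : K)⁻¹ * (⟨x⁻¹ * g ^ (c x : ℤ) * x, hc_mem x⟩ : K) * ⟨y, hy⟩ := by
      apply Subtype.ext
      show (x * y)⁻¹ * g ^ (c (x * y) : ℤ) * (x * y) = y⁻¹ * (x⁻¹ * g ^ (c x : ℤ) * x) * y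
      rw [hcc]
      group
    show f _ = f _
    rw [hsub, hf_conj]
  have hc1 : c (1 : G) = 1 := by
    have h1 : (1 : G)⁻¹ * g ^ (1 : ℤ) * 1 ∈ K := by simpa using hgK
    have h2 : c 1 ∣ 1 := by exact_mod_cast (hcK 1 1).mp h1
    exact Nat.dvd_one.mp h2
  have ht1 : t (1 : G) = 1 := by
    apply hginj
    show g ^ t 1 = g ^ (1 : ℤ)
    have hsub : (⟨(1 : G)⁻¹ * g ^ (c (1 : G) : ℤ) * 1, hc_mem 1⟩ : K) = ⟨g, hgK⟩ := by
      apply Subtype.ext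
      show (1 : G)⁻¹ * g ^ (c (1 : G) : ℤ) * 1 = g
      rw [hc1]
      simp
    show g ^ f _ = _
    rw [hsub, hf, zpow_one]
    exact hρid g (Subgroup.mem_zpowers g)
  -- data on the (finite) coset space of `K`
  haveI : Fintype (G ⧸ K) := Fintype.ofFinite _
  let cQ : G ⧸ K → ℕ := fun q => c q.out
  let tQ : G ⧸ K → ℤ := fun q => t q.out
  have hcQ : ∀ x : G, cQ (↑x) = c x := by
    intro x
    obtain ⟨y, hy⟩ := QuotientGroup.mk_out_eq_mul K x
    show c _ = c x
    rw [hy]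
    exact hc_coset x y y.2
  have htQ : ∀ x : G, tQ (↑x) = t x := by
    intro x
    obtain ⟨y, hy⟩ := QuotientGroup.mk_out_eq_mul K x
    show t _ = t x
    rw [hy]
    exact ht_coset x y y.2
  let n₀ : ℕ := Finset.univ.lcm (fun q : G ⧸ K => cQ q * max 1 (tQ q).natAbs)
  let E : ℕ := Finset.univ.lcm (fun q : G ⧸ K => cQ q / Nat.gcd (cQ q) (tQ q).natAbs)
  have hn₀0 : n₀ ≠ 0 := by
    intro h
    rw [Finset.lcm_eq_zero_iff] at h
    obtain ⟨q, -, hq⟩ := h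
    have hq' : cQ q * max 1 (tQ q).natAbs = 0 := hq
    rcases Nat.mul_eq_zero.mp hq' with h | h
    · exact (hc_pos q.out).ne' h
    · omega
  have hE0 : E ≠ 0 := by
    intro h
    rw [Finset.lcm_eq_zero_iff] at h
    obtain ⟨q, -, hq⟩ := h
    have hq' : cQ q / Nat.gcd (cQ q) (tQ q).natAbs = 0 := hq
    have hgpos : 0 < Nat.gcd (cQ q) (tQ q).natAbs := Nat.gcd_pos_of_pos_left _ (hc_pos q.out)
    have : 0 < cQ q / Nat.gcd (cQ q) (tQ q).natAbs :=
      Nat.div_pos (Nat.le_of_dvd (hc_pos q.out) (Nat.gcd_dvd_left _ _)) hgpos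
    omega
  have hcn₀ : ∀ x : G, c x ∣ n₀ := by
    intro x
    have h : cQ (↑x : G ⧸ K) * max 1 (tQ (↑x : G ⧸ K)).natAbs ∣ n₀ :=
      Finset.dvd_lcm (Finset.mem_univ _)
    rw [hcQ x] at h
    exact (dvd_mul_right _ _).trans h
  have htn₀ : ∀ x : G, t x ≠ 0 → (t x).natAbs ∣ n₀ := by
    intro x ht
    have h : cQ (↑x : G ⧸ K) * max 1 (tQ (↑x : G ⧸ K)).natAbs ∣ n₀ :=
      Finset.dvd_lcm (Finset.mem_univ _)
    rw [hcQ x, htQ x] at h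
    have hmax : max 1 (t x).natAbs = (t x).natAbs := by
      have : 0 < (t x).natAbs := Int.natAbs_pos.mpr ht
      omega
    rw [hmax] at h
    exact (dvd_mul_left _ _).trans h
  have huE : ∀ x : G, (c x / Nat.gcd (c x) (t x).natAbs) ∣ E := by
    intro x
    have h : cQ (↑x : G ⧸ K) / Nat.gcd (cQ (↑x : G ⧸ K)) (tQ (↑x : G ⧸ K)).natAbs ∣ E :=
      Finset.dvd_lcm (Finset.mem_univ _)
    rwa [hcQ x, htQ x] at h
  refine ⟨n₀ * E, Nat.one_le_iff_ne_zero.mpr (Nat.mul_ne_zero hn₀0 hE0), ?_⟩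
  intro k hk
  set d : ℕ := k * n₀ with hd
  have hd0 : d ≠ 0 := Nat.mul_ne_zero (by omega) hn₀0
  haveI : NeZero d := ⟨hd0⟩
  have hn₀d : n₀ ∣ d := dvd_mul_left n₀ k
  -- the mod-`d` quotient of the retraction, and the corresponding finite-index subgroup
  let ω : K →* Multiplicative (ZMod d) :=
    MonoidHom.mk' (fun y => Multiplicative.ofAdd ((f y : ZMod d)))
      (by
        intro a b
        show Multiplicative.ofAdd ((f (a * b) : ℤ) : ZMod d)
            = Multiplicative.ofAdd ((f a : ℤ) : ZMod d) * Multiplicative.ofAdd ((f b : ℤ) : ZMod d)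
        rw [hf_mul]
        push_cast
        rw [ofAdd_add])
  let L : Subgroup G := (ω.ker).map K.subtype
  have hLmem : ∀ w : G, w ∈ L ↔ ∃ hw : w ∈ K, (d : ℤ) ∣ f ⟨w, hw⟩ := by
    intro w
    constructor
    · intro hwL
      rw [Subgroup.mem_map] at hwL
      obtain ⟨z, hz, rfl⟩ := hwL
      refine ⟨z.2, ?_⟩
      rw [MonoidHom.mem_ker] at hz
      have hz' : Multiplicative.ofAdd ((f z : ℤ) : ZMod d) = 1 := hz
      have : ((f z : ℤ) : ZMod d) = 0 := ofAdd_eq_one.mp hz'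
      rw [ZMod.intCast_zmod_eq_zero_iff_dvd] at this
      simpa using this
    · rintro ⟨hw, hdvd⟩
      rw [Subgroup.mem_map]
      refine ⟨⟨w, hw⟩, ?_, rfl⟩
      rw [MonoidHom.mem_ker]
      show Multiplicative.ofAdd ((f ⟨w, hw⟩ : ZMod d)) = 1
      rw [ofAdd_eq_one, ZMod.intCast_zmod_eq_zero_iff_dvd]
      exact hdvd
  haveI hLfi : L.FiniteIndex := by
    constructor
    rw [Subgroup.index_map_subtype]
    exact Nat.mul_ne_zero Subgroup.FiniteIndex.index_ne_zero Subgroup.FiniteIndex.index_ne_zero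
  have hLchar : ∀ (x : G) (m : ℤ),
      x⁻¹ * g ^ m * x ∈ L ↔ ∃ j : ℤ, m = (c x : ℤ) * j ∧ (d : ℤ) ∣ j * t x := by
    intro x m
    constructor
    · intro h
      obtain ⟨hK', hdvd⟩ := (hLmem _).mp h
      obtain ⟨j, hj⟩ := (hcK x m).mp hK'
      subst hj
      refine ⟨j, rfl, ?_⟩
      rwa [hft x j hK'] at hdvd
    · rintro ⟨j, rfl, hdvd⟩
      have hmemK : x⁻¹ * g ^ ((c x : ℤ) * j) * x ∈ K := (hcK x _).mpr ⟨j, rfl⟩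
      exact (hLmem _).mpr ⟨hmemK, by rw [hft x j hmemK]; exact hdvd⟩
  -- the permutation action on `G ⧸ L`
  let σ : Equiv.Perm (G ⧸ L) := MulAction.toPermHom G (G ⧸ L) g
  have hσpow : ∀ N : ℕ, (σ ^ N = 1 ↔ ∀ x : G, x⁻¹ * g ^ (N : ℤ) * x ∈ L) := by
    intro N
    have hσN : σ ^ N = MulAction.toPermHom G (G ⧸ L) (g ^ N) := (map_pow _ _ _).symm
    rw [hσN]
    constructor
    · intro h x
      have h1 : (g ^ N) • ((↑x : G ⧸ L)) = ↑x := by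
        have := Equiv.ext_iff.mp h (↑x : G ⧸ L)
        simpa using this
      rw [MulAction.Quotient.smul_mk, smul_eq_mul] at h1
      have h2 := QuotientGroup.eq.mp h1
      have hid : x⁻¹ * g ^ (N : ℤ) * x = ((g ^ N * x)⁻¹ * x)⁻¹ := by
        rw [← zpow_natCast]
        group
      rw [hid]
      exact inv_mem h2
    · intro h
      apply Equiv.ext
      intro q
      induction q using QuotientGroup.induction_on with
      | H x =>
        show (g ^ N) • ((↑x : G ⧸ L)) = _
        rw [MulAction.Quotient.smul_mk, smul_eq_mul]
        show _ = (1 : Equiv.Perm (G ⧸ L)) (↑x)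
        rw [Equiv.Perm.one_apply]
        rw [QuotientGroup.eq]
        have hid : (g ^ N * x)⁻¹ * x = (x⁻¹ * g ^ (N : ℤ) * x)⁻¹ := by
          rw [← zpow_natCast]
          group
        rw [hid]
        exact inv_mem (h x)
  have hpow : ∀ N : ℕ, (σ ^ N = 1 ↔ ∀ x : G,
      ∃ j : ℤ, (N : ℤ) = (c x : ℤ) * j ∧ (d : ℤ) ∣ j * t x) :=
    fun N => (hσpow N).trans (forall_congr' fun x => hLchar x N)
  -- Claim A : `σ ^ (d * E) = 1`
  have hA : σ ^ (d * E) = 1 := by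
    rw [hpow]
    intro x
    obtain ⟨w, hw⟩ : c x ∣ d := (hcn₀ x).trans hn₀d
    refine ⟨((w * E : ℕ) : ℤ), by push_cast [hw]; ring, ?_⟩
    by_cases ht : t x = 0
    · simp [ht]
    · have hnat : d ∣ w * E * (t x).natAbs := by
        obtain ⟨E₂, hE₂⟩ := huE x
        set Gg := Nat.gcd (c x) (t x).natAbs with hGgdef
        set U := c x / Gg with hUdef
        set V := (t x).natAbs / Gg with hVdef
        have hu : Gg * U = c x := Nat.mul_div_cancel' (Nat.gcd_dvd_left _ _)
        have hv : Gg * V = (t x).natAbs := Nat.mul_div_cancel' (Nat.gcd_dvd_right _ _)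
        refine ⟨E₂ * V, ?_⟩
        calc w * E * (t x).natAbs = w * (U * E₂) * (Gg * V) := by rw [hE₂, hv]
          _ = (Gg * U) * w * (E₂ * V) := by ring
          _ = d * (E₂ * V) := by rw [hu, hw]
      have : ((d : ℕ) : ℤ) ∣ ((w * E : ℕ) : ℤ) * t x := by
        rw [← Int.natAbs_dvd_natAbs]
        simpa [Int.natAbs_mul] using hnat
      exact this
  -- Claim B : `d ∣ orderOf σ`
  have hB : d ∣ orderOf σ := by
    obtain ⟨j, hj, hdvd⟩ := (hpow (orderOf σ)).mp (pow_orderOf_eq_one σ) 1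
    rw [hc1] at hj
    rw [ht1, mul_one] at hdvd
    have : ((d : ℕ) : ℤ) ∣ ((orderOf σ : ℕ) : ℤ) := by
      rw [hj]
      simpa using hdvd
    exact_mod_cast this
  -- Claim C : `d * u q ∣ orderOf σ` for every coset `q`
  have hC : ∀ q : G ⧸ K, d * (cQ q / Nat.gcd (cQ q) (tQ q).natAbs) ∣ orderOf σ := by
    intro q
    show d * (c q.out / Nat.gcd (c q.out) (t q.out).natAbs) ∣ orderOf σ
    set x := q.out with hx
    obtain ⟨j, hj, hdvd⟩ := (hpow (orderOf σ)).mp (pow_orderOf_eq_one σ) x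
    by_cases ht : t x = 0
    · rw [ht]
      simp only [Int.natAbs_zero, Nat.gcd_zero_right, Nat.div_self (hc_pos x), mul_one]
      exact hB
    · set T := (t x).natAbs with hT
      set Gg := Nat.gcd (c x) T with hGg
      have hGgpos : 0 < Gg := Nat.gcd_pos_of_pos_left _ (hc_pos x)
      have hTpos : 0 < T := Int.natAbs_pos.mpr ht
      obtain ⟨s, hs⟩ : T ∣ d := (htn₀ x ht).trans hn₀d
      have hDcj : orderOf σ = c x * j.natAbs := by
        have := congrArg Int.natAbs hj
        simpa [Int.natAbs_mul] using this
      have hdJT : d ∣ j.natAbs * T := by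
        have h2 := Int.natAbs_dvd_natAbs.mpr hdvd
        simpa [Int.natAbs_mul] using h2
      obtain ⟨m, hm⟩ := hdJT
      have hJ : j.natAbs = s * m := by
        have h3 : T * j.natAbs = T * (s * m) := by
          rw [mul_comm T j.natAbs, hm, hs]
          ring
        exact Nat.eq_of_mul_eq_mul_left hTpos h3
      have hcsD : (c x * s) ∣ orderOf σ := ⟨m, by rw [hDcj, hJ]; ring⟩
      set U := c x / Gg with hUdef
      set V := T / Gg with hVdef
      have hu : Gg * U = c x := Nat.mul_div_cancel' (Nat.gcd_dvd_left _ _)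
      have hv : Gg * V = T := Nat.mul_div_cancel' (Nat.gcd_dvd_right _ _)
      have hcop : Nat.Coprime U V := Nat.coprime_div_gcd_div_gcd hGgpos
      have e1 : d = (Gg * s) * V := by rw [hs, ← hv]; ring
      have e2 : c x * s = (Gg * s) * U := by rw [← hu]; ring
      have hlcm : Nat.lcm d (c x * s) = d * U := by
        rw [e1, e2, Nat.lcm_mul_left, (hcop.symm).lcm_eq_mul]
        ring
      have hfin := Nat.lcm_dvd hB hcsD
      rw [hlcm] at hfin
      exact hfin
  -- the exact order computation
  have hEq : orderOf σ = d * E := by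
    apply Nat.dvd_antisymm
    · exact orderOf_dvd_of_pow_eq_one hA
    · have hne : (Finset.univ : Finset (G ⧸ K)).Nonempty := Finset.univ_nonempty
      have hdist := finset_lcm_mul_distrib d
        (fun q : G ⧸ K => cQ q / Nat.gcd (cQ q) (tQ q).natAbs) Finset.univ hne
      show d * E ∣ orderOf σ
      rw [show d * E = Finset.univ.lcm
          (fun q : G ⧸ K => d * (cQ q / Nat.gcd (cQ q) (tQ q).natAbs)) from hdist.symm]
      exact Finset.lcm_dvd (fun q _ => hC q)
  -- package into a finite group in `Type 0`
  haveI : Finite (G ⧸ L) := Subgroup.finite_quotient_of_finiteIndex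
  obtain ⟨M, iG, iFt, ⟨eqv⟩⟩ :=
    Finite.exists_type_univ_nonempty_mulEquiv.{_, 0} (Equiv.Perm (G ⧸ L))
  letI := iG
  letI := iFt
  refine ⟨M, iG, inferInstance, eqv.toMonoidHom.comp (MulAction.toPermHom G (G ⧸ L)), ?_⟩
  have happ : (eqv.toMonoidHom.comp (MulAction.toPermHom G (G ⧸ L))) g = eqv.toMonoidHom σ := rfl
  rw [happ, orderOf_injective eqv.toMonoidHom eqv.injective σ, hEq, hd]
  ring
end
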